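/- arXiv:2212.00705 — 2 statements merged into one kernel-verified Lean document; each statement's English description precedes it below -/
import Mathlib

section
/- Let Q ⊂ ℝⁿ be a bounded domain and η : Q̄ → ℝⁿ a C¹ map with det ∇η > 0. If the Ciarlet–Nečas condition holds, i.e. ℒⁿ(η(Q)) = ∫_Q det ∇η dx, then η is injective almost everywhere: the set of points x ∈ Q such that η⁻¹(η(x)) ≠ {x} has Lebesgue measure zero in Q. -/
open MeasureTheory

/-- The Ciarlet–Nečas condition implies almost-everywhere injectivity for an
orientation-preserving `C¹` deformation of a bounded domain. -/
theorem stmt8 {d : ℕ} (Q : Set (EuclideanSpace ℝ (Fin d)))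
    (hQopen : IsOpen Q) (hQbdd : Bornology.IsBounded Q)
    (η : EuclideanSpace ℝ (Fin d) → EuclideanSpace ℝ (Fin d))
    (hη : ContDiff ℝ 1 η)
    (hdet : ∀ x ∈ closure Q, 0 < (fderiv ℝ η x).det)
    (hCN : volume (η '' Q) = ∫⁻ x in Q, ENNReal.ofReal ((fderiv ℝ η x).det)) :
    volume {x | x ∈ Q ∧ ∃ y ∈ Q, η y = η x ∧ y ≠ x} = 0 := by
  classical
  rcases Q.eq_empty_or_nonempty with rfl | hQne
  · simp
  set g : EuclideanSpace ℝ (Fin d) → ENNReal :=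
    fun x => ENNReal.ofReal ((fderiv ℝ η x).det) with hg_def
  have hgcont : Continuous fun x => (fderiv ℝ η x).det :=
    ContinuousLinearMap.continuous_det.comp (hη.continuous_fderiv one_ne_zero)
  have hgmeas : Measurable g := ENNReal.measurable_ofReal.comp hgcont.measurable
  have hηdiff : Differentiable ℝ η := hη.differentiable one_ne_zero
  -- local injectivity from the inverse function theorem
  have hloc : ∀ x : Q, ∃ U, IsOpen U ∧ (x : EuclideanSpace ℝ (Fin d)) ∈ U ∧ U ⊆ Q ∧
      Set.InjOn η U := by
    rintro ⟨x, hx⟩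
    have hdx : (fderiv ℝ η x).det ≠ 0 := ne_of_gt (hdet x (subset_closure hx))
    set e := (fderiv ℝ η x).toContinuousLinearEquivOfDetNeZero hdx with he
    have hsd : HasStrictFDerivAt η (e : EuclideanSpace ℝ (Fin d) →L[ℝ]
        EuclideanSpace ℝ (Fin d)) x := by
      rw [he, ContinuousLinearMap.coe_toContinuousLinearEquivOfDetNeZero]
      exact hη.contDiffAt.hasStrictFDerivAt one_ne_zero
    set P := hsd.toOpenPartialHomeomorph η with hP
    have hinj : Set.InjOn η P.source := by
      have := P.injOn
      rwa [show (P : EuclideanSpace ℝ (Fin d) → EuclideanSpace ℝ (Fin d)) = η from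
        hsd.toOpenPartialHomeomorph_coe] at this
    exact ⟨P.source ∩ Q, P.open_source.inter hQopen,
      ⟨hsd.mem_toOpenPartialHomeomorph_source, hx⟩, Set.inter_subset_right,
      hinj.mono Set.inter_subset_left⟩
  choose U hUopen hUmem hUsub hUinj using hloc
  obtain ⟨T, hTc, hTeq⟩ := TopologicalSpace.isOpen_iUnion_countable U hUopen
  have hUQ : ⋃ x, U x = Q := by
    refine subset_antisymm (Set.iUnion_subset fun x => hUsub x) fun x hx => ?_
    exact Set.mem_iUnion.2 ⟨⟨x, hx⟩, hUmem ⟨x, hx⟩⟩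
  have hTne : T.Nonempty := by
    rcases hQne with ⟨x0, hx0⟩
    rcases Set.eq_empty_or_nonempty T with rfl | h
    · simp only [Set.mem_empty_iff_false, Set.iUnion_of_empty, Set.iUnion_empty] at hTeq
      have : x0 ∈ ⋃ x, U x := by rw [hUQ]; exact hx0
      rw [← hTeq] at this
      exact absurd this (Set.notMem_empty _)
    · exact h
  obtain ⟨f, hf⟩ := hTc.exists_eq_range hTne
  set V : ℕ → Set (EuclideanSpace ℝ (Fin d)) := fun n => U (f n) with hV
  have hVQ : ⋃ n, V n = Q := by
    have : ⋃ n, V n = ⋃ i ∈ T, U i := by rw [hf, Set.biUnion_range]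
    rw [this, hTeq, hUQ]
  set A : ℕ → Set (EuclideanSpace ℝ (Fin d)) := disjointed V with hA
  have hAmeas : ∀ n, MeasurableSet (A n) :=
    MeasurableSet.disjointed fun n => (hUopen (f n)).measurableSet
  have hAdisj : Pairwise (Function.onFun Disjoint A) := disjoint_disjointed V
  have hAV : ∀ n, A n ⊆ V n := disjointed_subset V
  have hAQ : ⋃ n, A n = Q := by rw [hA, iUnion_disjointed, hVQ]
  have hAsubQ : ∀ n, A n ⊆ Q := fun n => (hAV n).trans (hUsub (f n))
  have hAinj : ∀ n, Set.InjOn η (A n) := fun n => (hUinj (f n)).mono (hAV n)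
  -- the change of variables formula for subsets of Q where η is injective
  have key : ∀ s : Set (EuclideanSpace ℝ (Fin d)), MeasurableSet s → s ⊆ Q →
      Set.InjOn η s → ∫⁻ x in s, g x = volume (η '' s) := by
    intro s hs hsQ hsinj
    have habs : ∫⁻ x in s, g x = ∫⁻ x in s, ENNReal.ofReal |(fderiv ℝ η x).det| := by
      refine setLIntegral_congr_fun hs (fun x hx => ?_)
      rw [abs_of_pos (hdet x (subset_closure (hsQ hx)))]
    rw [habs]
    exact lintegral_abs_det_fderiv_eq_addHaar_image volume hs
      (fun x _ => (hηdiff x).hasFDerivAt.hasFDerivWithinAt) hsinj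
  set F : ℕ → Set (EuclideanSpace ℝ (Fin d)) := fun n => η '' A n with hF
  have hFmeas : ∀ n, MeasurableSet (F n) := fun n =>
    (hAmeas n).image_of_continuousOn_injOn hη.continuous.continuousOn (hAinj n)
  have hFA : ∀ n, volume (F n) = ∫⁻ x in A n, g x := fun n =>
    (key (A n) (hAmeas n) (hAsubQ n) (hAinj n)).symm
  have hsum : ∫⁻ x in Q, g x = ∑' n, volume (F n) := by
    rw [← hAQ, lintegral_iUnion hAmeas hAdisj]
    exact tsum_congr fun n => (hFA n).symm
  have hQmeas : MeasurableSet Q := hQopen.measurableSet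
  -- finiteness of the total mass
  have hfin : ∫⁻ x in Q, g x ≠ ⊤ := by
    obtain ⟨C, hC⟩ := (hQbdd.isCompact_closure).exists_bound_of_continuousOn
      hgcont.continuousOn
    have hbound : ∫⁻ x in Q, g x ≤ ENNReal.ofReal C * volume Q := by
      rw [← setLIntegral_const Q (ENNReal.ofReal C)]
      refine setLIntegral_mono measurable_const fun x hx => ?_
      exact ENNReal.ofReal_le_ofReal ((le_abs_self _).trans
        ((Real.norm_eq_abs _ ▸ hC x (subset_closure hx))))
    exact (hbound.trans_lt (ENNReal.mul_lt_top ENNReal.ofReal_lt_top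
      hQbdd.measure_lt_top)).ne
  have hηQ : η '' Q = ⋃ n, F n := by rw [← hAQ, Set.image_iUnion]
  -- overlaps are null
  set G : ℕ → Set (EuclideanSpace ℝ (Fin d)) :=
    fun i => ⋃ j, if j = i then ∅ else F j with hG
  have hGmeas : ∀ i, MeasurableSet (G i) := fun i =>
    MeasurableSet.iUnion fun j => by
      by_cases h : j = i <;> simp [h, hFmeas j]
  have hFG : ∀ i, F i ∪ G i = ⋃ n, F n := by
    intro i
    refine subset_antisymm ?_ ?_
    · refine Set.union_subset (Set.subset_iUnion F i) (Set.iUnion_subset fun j => ?_)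
      by_cases h : j = i <;> simp [h, Set.subset_iUnion F j]
    · refine Set.iUnion_subset fun j => ?_
      by_cases h : j = i
      · subst h; exact Set.subset_union_left
      · intro y hy
        exact Set.mem_union_right _ (Set.mem_iUnion.2 ⟨j, by simp [h, hy]⟩)
  have hnull : ∀ i, volume (F i ∩ G i) = 0 := by
    intro i
    have h1 : volume (F i ∪ G i) + volume (F i ∩ G i) = volume (F i) + volume (G i) :=
      measure_union_add_inter (F i) (hGmeas i)
    have h2 : volume (G i) ≤ ∑' j, if j = i then 0 else volume (F j) := by
      refine (measure_iUnion_le _).trans (ENNReal.tsum_le_tsum fun j => ?_)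
      by_cases h : j = i <;> simp [h]
    have h3 : ∑' n, volume (F n) = volume (F i) + ∑' j, if j = i then 0 else volume (F j) := by
      rw [ENNReal.tsum_eq_add_tsum_ite i]
      congr 1
      exact tsum_congr fun j => by by_cases h : j = i <;> simp [h]
    have htot : volume (⋃ n, F n) = ∑' n, volume (F n) := by
      rw [← hηQ, hCN, hsum]
    have hfin' : volume (F i ∪ G i) ≠ ⊤ := by
      rw [hFG i, htot, ← hsum]; exact hfin
    have : volume (F i ∪ G i) + volume (F i ∩ G i) ≤ volume (F i ∪ G i) + 0 := by
      calc volume (F i ∪ G i) + volume (F i ∩ G i)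
          = volume (F i) + volume (G i) := h1
        _ ≤ volume (F i) + ∑' j, if j = i then 0 else volume (F j) := by
            exact add_le_add_right h2 _
        _ = ∑' n, volume (F n) := h3.symm
        _ = volume (⋃ n, F n) := htot.symm
        _ = volume (F i ∪ G i) + 0 := by rw [hFG i, add_zero]
    exact le_antisymm ((ENNReal.add_le_add_iff_left hfin').1 this) zero_le
  -- bad sets have measure zero
  set E : ℕ → Set (EuclideanSpace ℝ (Fin d)) :=
    fun i => A i ∩ η ⁻¹' (F i ∩ G i) with hE
  have hEmeas : ∀ i, MeasurableSet (E i) := fun i =>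
    (hAmeas i).inter (((hFmeas i).inter (hGmeas i)).preimage hη.continuous.measurable)
  have hEnull : ∀ i, volume (E i) = 0 := by
    intro i
    have hEQ : E i ⊆ Q := fun x hx => hAsubQ i hx.1
    have hEint : ∫⁻ x in E i, g x = volume (η '' E i) :=
      key (E i) (hEmeas i) hEQ ((hAinj i).mono Set.inter_subset_left)
    have himg : η '' E i ⊆ F i ∩ G i := by
      rintro _ ⟨x, hx, rfl⟩; exact hx.2
    have hzero : ∫⁻ x in E i, g x = 0 := by
      rw [hEint]
      exact le_antisymm ((measure_mono himg).trans (hnull i).le) zero_le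
    rw [lintegral_eq_zero_iff hgmeas] at hzero
    have h0 : (volume.restrict (E i)) {x | g x ≠ 0} = 0 := by
      simpa [Filter.EventuallyEq, ae_iff] using hzero
    have hsub : E i ⊆ {x | g x ≠ 0} := by
      intro x hx
      have : 0 < (fderiv ℝ η x).det := hdet x (subset_closure (hEQ hx))
      simp only [Set.mem_setOf_eq, hg_def, ne_eq, ENNReal.ofReal_eq_zero, not_le]
      exact this
    refine le_antisymm ?_ zero_le
    calc volume (E i) = (volume.restrict (E i)) (E i) :=
          (Measure.restrict_apply_self _ _).symm
      _ ≤ (volume.restrict (E i)) {x | g x ≠ 0} := measure_mono hsub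
      _ = 0 := h0
  -- the set of non-injectivity points is contained in the union of the bad sets
  have hNsub : {x | x ∈ Q ∧ ∃ y ∈ Q, η y = η x ∧ y ≠ x} ⊆ ⋃ i, E i := by
    rintro x ⟨hxQ, y, hyQ, hxy, hne⟩
    have hx' : x ∈ ⋃ n, A n := hAQ ▸ hxQ
    have hy' : y ∈ ⋃ n, A n := hAQ ▸ hyQ
    obtain ⟨i, hxi⟩ := Set.mem_iUnion.1 hx'
    obtain ⟨j, hyj⟩ := Set.mem_iUnion.1 hy'
    have hji : j ≠ i := by
      rintro rfl
      exact hne ((hUinj _) (hAV _ hyj) (hAV _ hxi) hxy)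
    refine Set.mem_iUnion.2 ⟨i, hxi, ⟨x, hxi, rfl⟩, Set.mem_iUnion.2 ⟨j, ?_⟩⟩
    simp only [hji, if_false]
    exact ⟨y, hyj, hxy⟩
  refine le_antisymm ?_ zero_le
  calc volume {x | x ∈ Q ∧ ∃ y ∈ Q, η y = η x ∧ y ≠ x}
      ≤ volume (⋃ i, E i) := measure_mono hNsub
    _ = 0 := measure_iUnion_null hEnull
end

section
/- Separating-hyperplane extraction of a contact force: Let Z be a Banach space, ℓ ∈ Z*, K a compact metric space, and N : Z → C(K) a bounded linear map. Define M⁺ = {(s, w) ∈ ℝ × C(K) : ∃φ ∈ Z, ℓ⟨φ⟩ ≤ s and N(φ) ≥ w pointwise on K} and M⁻ = {(s,w) : s ≤ 0, w ≥ 0}. Assume M⁺ ∩ int M⁻ = ∅ and that there exists φ₀ ∈ Z with N(φ₀) ≥ 1/2 pointwise on K. Then there exist λ < 0 and a nonnegative Radon measure σ₀ ∈ M⁺(K) such that λ ℓ⟨φ⟩ + ∫_K N(φ) dσ₀ = 0 for all φ ∈ Z, and ‖σ₀‖_{M(K)} ≤ −2λ ℓ⟨φ₀⟩. -/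
open MeasureTheory

set_option linter.unusedSectionVars false
set_option linter.unusedVariables false
open MeasureTheory Set Function Topology ENNReal

noncomputable section

namespace StmtRiesz

variable {K : Type*} [MetricSpace K] [CompactSpace K] [MeasurableSpace K] [BorelSpace K]

variable (Λ : C(K, ℝ) →ₗ[ℝ] ℝ)

/-- test functions for an (open) set `U`. -/
def FF (U : Set K) : Set C(K, ℝ) :=
  {f | (∀ x, 0 ≤ f x ∧ f x ≤ 1) ∧ tsupport ⇑f ⊆ U}

def LL (U : Set K) : ℝ≥0∞ := ⨆ f ∈ FF U, ENNReal.ofReal (Λ f)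

def nu (A : Set K) : ℝ≥0∞ := ⨅ (U : Set K) (_ : IsOpen U) (_ : A ⊆ U), LL Λ U

variable {Λ}

section basic

theorem hmono (hpos : ∀ f : C(K, ℝ), (∀ x, 0 ≤ f x) → 0 ≤ Λ f)
    {f g : C(K, ℝ)} (h : ∀ x, f x ≤ g x) : Λ f ≤ Λ g := by
  have := hpos (g - f) (fun x => by simpa using h x)
  rw [map_sub] at this; linarith

theorem LL_mono {U V : Set K} (h : U ⊆ V) : LL Λ U ≤ LL Λ V := by
  refine iSup_le fun f => iSup_le fun hf => ?_
  exact le_iSup₂ (f := fun f (_ : f ∈ FF V) => ENNReal.ofReal (Λ f)) f ⟨hf.1, hf.2.trans h⟩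

theorem le_LL {U : Set K} {f : C(K, ℝ)} (hf : f ∈ FF U) : ENNReal.ofReal (Λ f) ≤ LL Λ U :=
  le_iSup₂ (f := fun f (_ : f ∈ FF U) => ENNReal.ofReal (Λ f)) f hf

theorem LL_le_one (hpos : ∀ f : C(K, ℝ), (∀ x, 0 ≤ f x) → 0 ≤ Λ f) (U : Set K) :
    LL Λ U ≤ ENNReal.ofReal (Λ 1) := by
  refine iSup₂_le fun f hf => ENNReal.ofReal_le_ofReal ?_
  exact hmono hpos fun x => (hf.1 x).2

theorem nu_le_LL {A U : Set K} (hU : IsOpen U) (hAU : A ⊆ U) : nu Λ A ≤ LL Λ U :=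
  iInf₂_le_of_le U hU (iInf_le_of_le hAU le_rfl)

theorem nu_mono {A B : Set K} (h : A ⊆ B) : nu Λ A ≤ nu Λ B := by
  refine le_iInf₂ fun U hU => le_iInf fun hBU => nu_le_LL hU (h.trans hBU)

theorem nu_open {U : Set K} (hU : IsOpen U) : nu Λ U = LL Λ U :=
  le_antisymm (nu_le_LL hU subset_rfl) (le_iInf₂ fun V hV => le_iInf fun hUV => LL_mono hUV)

theorem nu_empty : nu Λ (∅ : Set K) = 0 := by
  refine le_antisymm ?_ (zero_le)
  rw [nu_open isOpen_empty]
  refine iSup₂_le fun f hf => ?_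
  have : f = 0 := by
    ext x
    by_contra hx
    have hmem : x ∈ tsupport ⇑f := subset_closure (by simpa [Function.mem_support] using hx)
    exact absurd (hf.2 hmem) (by simp)
  simp [this]

theorem nu_le_top (hpos : ∀ f : C(K, ℝ), (∀ x, 0 ≤ f x) → 0 ≤ Λ f) (A : Set K) :
    nu Λ A ≤ ENNReal.ofReal (Λ 1) :=
  (nu_le_LL isOpen_univ (subset_univ A)).trans (LL_le_one hpos _)

end basic

end StmtRiesz

namespace StmtRiesz2
open StmtRiesz

variable {K : Type*} [MetricSpace K] [CompactSpace K] [MeasurableSpace K] [BorelSpace K]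
variable {Λ : C(K, ℝ) →ₗ[ℝ] ℝ}

theorem LL_iUnion_le (hpos : ∀ f : C(K, ℝ), (∀ x, 0 ≤ f x) → 0 ≤ Λ f)
    (U : ℕ → Set K) (hU : ∀ n, IsOpen (U n)) :
    LL Λ (⋃ n, U n) ≤ ∑' n, LL Λ (U n) := by
  refine iSup₂_le fun f hf => ?_
  -- finite subcover of the compact support
  have hcpt : IsCompact (tsupport ⇑f) := (isClosed_tsupport _).isCompact
  obtain ⟨t, ht⟩ := hcpt.elim_finite_subcover U hU hf.2
  -- partition of unity on `tsupport f` subordinate to the `U i`, `i ∈ t`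
  obtain ⟨po, hsub⟩ := PartitionOfUnity.exists_isSubordinate (ι := ↥t)
    (isClosed_tsupport ⇑f) (fun i => U i) (fun i => hU i)
    (by intro x hx; obtain ⟨i, hi, hxi⟩ := Set.mem_iUnion₂.mp (ht hx)
        exact Set.mem_iUnion.mpr ⟨⟨i, hi⟩, hxi⟩)
  -- decompose f
  have hdecomp : f = ∑ i : ↥t, po i * f := by
    ext x
    simp only [ContinuousMap.sum_apply, ContinuousMap.mul_apply]
    by_cases hx : x ∈ tsupport ⇑f
    · have h1 : ∑ᶠ i, po i x = 1 := po.sum_eq_one hx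
      rw [finsum_eq_sum_of_fintype] at h1
      rw [← Finset.sum_mul, h1, one_mul]
    · have : f x = 0 := image_eq_zero_of_notMem_tsupport hx
      simp [this]
  have hmem : ∀ i : ↥t, po i * f ∈ FF ((U i : Set K)) := by
    intro i
    refine ⟨fun x => ⟨mul_nonneg (po.nonneg i x) (hf.1 x).1,
      mul_le_one₀ (po.le_one i x) (hf.1 x).1 (hf.1 x).2⟩, ?_⟩
    have : tsupport ⇑(po i * f) ⊆ tsupport ⇑(po i) := by
      rw [ContinuousMap.coe_mul]; exact tsupport_mul_subset_left
    exact this.trans (hsub i)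
  have hΛ : Λ f = ∑ i : ↥t, Λ (po i * f) := by
    conv_lhs => rw [hdecomp]
    exact map_sum Λ _ _
  calc ENNReal.ofReal (Λ f) = ∑ i : ↥t, ENNReal.ofReal (Λ (po i * f)) := by
        rw [hΛ]
        exact ENNReal.ofReal_sum_of_nonneg fun i _ =>
          hpos _ fun x => mul_nonneg (po.nonneg i x) (hf.1 x).1
    _ ≤ ∑ i : ↥t, LL Λ (U i) := Finset.sum_le_sum fun i _ => le_LL (hmem i)
    _ = ∑ i ∈ t, LL Λ (U i) := Finset.sum_coe_sort t (fun n => LL Λ (U n))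
    _ ≤ ∑' n, LL Λ (U n) := ENNReal.sum_le_tsum t

theorem exists_open_of_nu_lt {A : Set K} {c : ℝ≥0∞} (h : nu Λ A < c) :
    ∃ U : Set K, IsOpen U ∧ A ⊆ U ∧ LL Λ U < c := by
  simp only [nu, iInf_lt_iff] at h
  obtain ⟨U, hU, hAU, hc⟩ := h
  exact ⟨U, hU, hAU, hc⟩

theorem nu_iUnion_le (hpos : ∀ f : C(K, ℝ), (∀ x, 0 ≤ f x) → 0 ≤ Λ f) (A : ℕ → Set K) :
    nu Λ (⋃ n, A n) ≤ ∑' n, nu Λ (A n) := by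
  refine ENNReal.le_of_forall_pos_le_add fun ε hε hfin => ?_
  obtain ⟨δ, hδ, hδsum⟩ := ENNReal.exists_pos_sum_of_countable (ε := ε) (by simpa using hε.ne') ℕ
  have hAn : ∀ n, nu Λ (A n) < nu Λ (A n) + (δ n : ℝ≥0∞) := fun n =>
    ENNReal.lt_add_right (lt_of_le_of_lt (ENNReal.le_tsum n) hfin).ne
      (by exact_mod_cast (hδ n).ne')
  choose U hUopen hAU hLU using fun n => exists_open_of_nu_lt (hAn n)
  calc nu Λ (⋃ n, A n) ≤ LL Λ (⋃ n, U n) :=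
        nu_le_LL (isOpen_iUnion hUopen) (Set.iUnion_mono hAU)
    _ ≤ ∑' n, LL Λ (U n) := LL_iUnion_le hpos U hUopen
    _ ≤ ∑' n, (nu Λ (A n) + (δ n : ℝ≥0∞)) := ENNReal.tsum_le_tsum fun n => (hLU n).le
    _ = (∑' n, nu Λ (A n)) + ∑' n, (δ n : ℝ≥0∞) := ENNReal.tsum_add
    _ ≤ (∑' n, nu Λ (A n)) + ε := add_le_add_right hδsum.le _

end StmtRiesz2

namespace StmtRiesz3
open StmtRiesz StmtRiesz2

variable {K : Type*} [MetricSpace K] [CompactSpace K] [MeasurableSpace K] [BorelSpace K]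
variable {Λ : C(K, ℝ) →ₗ[ℝ] ℝ}

theorem zero_mem_FF (U : Set K) : (0 : C(K, ℝ)) ∈ FF U := by
  refine ⟨fun x => by simp, ?_⟩
  have h0 : tsupport (0 : K → ℝ) = ∅ := tsupport_eq_empty_iff.mpr rfl
  rw [ContinuousMap.coe_zero, h0]
  exact Set.empty_subset _

theorem LL_eq_iSup (U : Set K) :
    LL Λ U = ⨆ f : FF (K := K) U, ENNReal.ofReal (Λ f) := by
  rw [LL, iSup_subtype']

theorem LL_inter_add_LL_inter_le (hpos : ∀ f : C(K, ℝ), (∀ x, 0 ≤ f x) → 0 ≤ Λ f)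
    {U A B : Set K} (hAB : Disjoint A B) :
    LL Λ (U ∩ A) + LL Λ (U ∩ B) ≤ LL Λ U := by
  rw [LL_eq_iSup (U ∩ A), LL_eq_iSup (U ∩ B)]
  have : Nonempty (FF (K := K) (U ∩ A)) := ⟨⟨0, zero_mem_FF _⟩⟩
  have : Nonempty (FF (K := K) (U ∩ B)) := ⟨⟨0, zero_mem_FF _⟩⟩
  refine ENNReal.iSup_add_iSup_le fun f g => ?_
  have hf := f.2; have hg := g.2
  have hfg : (f : C(K, ℝ)) + g ∈ FF U := by
    constructor
    · intro x
      refine ⟨add_nonneg (hf.1 x).1 (hg.1 x).1, ?_⟩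
      by_cases hfx : (f : C(K, ℝ)) x = 0
      · simpa [hfx] using (hg.1 x).2
      · have hxA : x ∈ A := (hf.2 (subset_closure (by simpa [Function.mem_support] using hfx))).2
        have hgx : (g : C(K, ℝ)) x = 0 := by
          by_contra hgx
          have hxB : x ∈ B := (hg.2 (subset_closure (by simpa [Function.mem_support] using hgx))).2
          exact absurd (hAB.ne_of_mem hxA hxB) (by simp)
        simpa [hgx] using (hf.1 x).2
    · refine Subset.trans ?_ (Set.union_subset (hf.2.trans inter_subset_left)
        (hg.2.trans inter_subset_left))
      rw [ContinuousMap.coe_add]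
      exact tsupport_add _ _
  calc ENNReal.ofReal (Λ f) + ENNReal.ofReal (Λ g)
      = ENNReal.ofReal (Λ ((f : C(K, ℝ)) + g)) := by
        rw [map_add]
        exact (ENNReal.ofReal_add (hpos _ fun x => (hf.1 x).1) (hpos _ fun x => (hg.1 x).1)).symm
    _ ≤ LL Λ U := le_LL hfg

theorem nu_superadd (hpos : ∀ f : C(K, ℝ), (∀ x, 0 ≤ f x) → 0 ≤ Λ f)
    {s t : Set K} (hst : Metric.AreSeparated s t) :
    nu Λ s + nu Λ t ≤ nu Λ (s ∪ t) := by
  obtain ⟨r, hr, hsep⟩ := hst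
  set r' : ℝ≥0∞ := min r 1 with hr'
  have hr'0 : r' ≠ 0 := by
    have : (0 : ℝ≥0∞) < r := pos_iff_ne_zero.mpr hr
    exact (lt_min this zero_lt_one).ne'
  have hr'top : r' ≠ ⊤ := (min_le_right _ _).trans_lt (by norm_num) |>.ne
  set ρ : ℝ := r'.toReal / 3 with hρ
  have hρ0 : 0 < ρ := by
    have : 0 < r'.toReal := ENNReal.toReal_pos hr'0 hr'top
    positivity
  have hdisj : Disjoint (Metric.thickening ρ s) (Metric.thickening ρ t) := by
    rw [Set.disjoint_left]
    intro x hxs hxt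
    rw [Metric.mem_thickening_iff_infEdist_lt] at hxs hxt
    obtain ⟨y, hy, hxy⟩ := EMetric.infEdist_lt_iff.mp hxs
    obtain ⟨z, hz, hxz⟩ := EMetric.infEdist_lt_iff.mp hxt
    have h1 : edist y z < ENNReal.ofReal ρ + ENNReal.ofReal ρ :=
      lt_of_le_of_lt (edist_triangle_left y z x) (ENNReal.add_lt_add hxy hxz)
    have h2 : ENNReal.ofReal ρ + ENNReal.ofReal ρ < r' := by
      rw [← ENNReal.ofReal_add hρ0.le hρ0.le]
      have : ρ + ρ < r'.toReal := by
        have : 0 < r'.toReal := ENNReal.toReal_pos hr'0 hr'top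
        rw [hρ]; linarith
      calc ENNReal.ofReal (ρ + ρ) < ENNReal.ofReal r'.toReal :=
            ENNReal.ofReal_lt_ofReal_iff_of_nonneg (by positivity) |>.mpr this
        _ = r' := ENNReal.ofReal_toReal hr'top
    have h3 : r' ≤ edist y z := (min_le_left r 1).trans (hsep y hy z hz) |>.trans_eq rfl
    exact absurd ((h3.trans h1.le).trans_lt h2) (lt_irrefl _)
  refine le_iInf₂ fun U hU => le_iInf fun hstU => ?_
  have h1 : nu Λ s ≤ LL Λ (U ∩ Metric.thickening ρ s) :=
    nu_le_LL (hU.inter Metric.isOpen_thickening)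
      (Set.subset_inter (subset_trans Set.subset_union_left hstU)
        (Metric.self_subset_thickening hρ0 s))
  have h2 : nu Λ t ≤ LL Λ (U ∩ Metric.thickening ρ t) :=
    nu_le_LL (hU.inter Metric.isOpen_thickening)
      (Set.subset_inter (subset_trans Set.subset_union_right hstU)
        (Metric.self_subset_thickening hρ0 t))
  exact (add_le_add h1 h2).trans (LL_inter_add_LL_inter_le hpos hdisj)

end StmtRiesz3

namespace StmtRiesz4
open StmtRiesz StmtRiesz2 StmtRiesz3

variable {K : Type*} [MetricSpace K] [CompactSpace K] [MeasurableSpace K] [BorelSpace K]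
variable (Λ : C(K, ℝ) →ₗ[ℝ] ℝ)

def muO : OuterMeasure K := OuterMeasure.ofFunction (nu Λ) nu_empty

variable {Λ}

theorem muO_eq (hpos : ∀ f : C(K, ℝ), (∀ x, 0 ≤ f x) → 0 ≤ Λ f) (A : Set K) :
    muO Λ A = nu Λ A :=
  OuterMeasure.ofFunction_eq A (fun _ h => nu_mono h) (nu_iUnion_le hpos)

theorem muO_isMetric (hpos : ∀ f : C(K, ℝ), (∀ x, 0 ≤ f x) → 0 ≤ Λ f) :
    (muO Λ).IsMetric := by
  intro s t hst
  refine le_antisymm (measure_union_le s t) ?_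
  rw [muO_eq hpos, muO_eq hpos, muO_eq hpos]
  exact nu_superadd hpos hst

def mu (Λ : C(K, ℝ) →ₗ[ℝ] ℝ) (hpos : ∀ f : C(K, ℝ), (∀ x, 0 ≤ f x) → 0 ≤ Λ f) : Measure K :=
  (muO Λ).toMeasure ((BorelSpace.measurable_eq (α := K)).le.trans
    (muO_isMetric hpos).borel_le_caratheodory)

theorem mu_apply (hpos : ∀ f : C(K, ℝ), (∀ x, 0 ≤ f x) → 0 ≤ Λ f)
    {s : Set K} (hs : MeasurableSet s) : mu Λ hpos s = nu Λ s := by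
  rw [mu, MeasureTheory.toMeasure_apply _ _ hs, muO_eq hpos]

theorem one_mem_FF : (1 : C(K, ℝ)) ∈ FF (Set.univ : Set K) :=
  ⟨fun x => by simp, Set.subset_univ _⟩

theorem mu_univ (hpos : ∀ f : C(K, ℝ), (∀ x, 0 ≤ f x) → 0 ≤ Λ f) :
    mu Λ hpos Set.univ = ENNReal.ofReal (Λ 1) := by
  rw [mu_apply hpos MeasurableSet.univ, nu_open isOpen_univ]
  refine le_antisymm (LL_le_one hpos _) ?_
  simpa using le_LL (Λ := Λ) one_mem_FF

theorem mu_finite (hpos : ∀ f : C(K, ℝ), (∀ x, 0 ≤ f x) → 0 ≤ Λ f) :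
    IsFiniteMeasure (mu Λ hpos) :=
  ⟨by rw [mu_univ hpos]; exact ENNReal.ofReal_lt_top⟩

end StmtRiesz4

namespace StmtRiesz5
open StmtRiesz StmtRiesz2 StmtRiesz3 StmtRiesz4

theorem iUnion_Ioc_grid (y : ℕ → ℝ) (hm : Monotone y) (n : ℕ) :
    ⋃ i ∈ Finset.range n, Set.Ioc (y i) (y (i + 1)) = Set.Ioc (y 0) (y n) := by
  induction n with
  | zero => simp
  | succ n ih =>
    rw [Finset.range_add_one, Finset.set_biUnion_insert, ih, Set.union_comm,
      Set.Ioc_union_Ioc_eq_Ioc (hm (Nat.zero_le n)) (hm (Nat.le_succ n))]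

variable {K : Type*} [MetricSpace K] [CompactSpace K] [MeasurableSpace K] [BorelSpace K]
variable {Λ : C(K, ℝ) →ₗ[ℝ] ℝ}

set_option maxHeartbeats 2000000 in
theorem le_integral (hpos : ∀ f : C(K, ℝ), (∀ x, 0 ≤ f x) → 0 ≤ Λ f) (f : C(K, ℝ)) :
    Λ f ≤ ∫ x, f x ∂(mu Λ hpos) := by
  set μ := mu Λ hpos with hμdef
  haveI hfinI : IsFiniteMeasure μ := mu_finite hpos
  set m : ℝ := (μ Set.univ).toReal with hmdef
  have hm0 : 0 ≤ m := ENNReal.toReal_nonneg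
  have hΛ1 : Λ 1 = m := by
    rw [hmdef, hμdef, mu_univ hpos, ENNReal.toReal_ofReal (hpos 1 (fun x => by simp))]
  set M : ℝ := ‖f‖ with hMdef
  have hM0 : 0 ≤ M := norm_nonneg f
  have hfM : ∀ x, |f x| ≤ M := fun x => by
    simpa [Real.norm_eq_abs] using f.norm_coe_le_norm x
  have hint : Integrable (fun x => f x) μ :=
    f.continuous.integrable_of_hasCompactSupport (isClosed_tsupport _).isCompact
  set T : ℝ := ∫ x, f x ∂μ with hTdef
  refine le_of_forall_pos_le_add fun ε hε => ?_
  set C : ℝ := 2 * m + 2 * M + 6 with hCdef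
  have hCpos : 0 < C := by positivity
  set δ : ℝ := min (ε / C) 1 with hδdef
  have hδ0 : 0 < δ := lt_min (div_pos hε hCpos) one_pos
  have hδ1 : δ ≤ 1 := min_le_right _ _
  have hδε : δ * C ≤ ε := by
    have h1 : δ ≤ ε / C := min_le_left _ _
    calc δ * C ≤ (ε / C) * C := mul_le_mul_of_nonneg_right h1 hCpos.le
      _ = ε := by field_simp
  -- the grid
  set n : ℕ := ⌈(2 * M + 2) / δ⌉₊ with hndef
  have hn : 0 < n := Nat.ceil_pos.mpr (div_pos (by linarith) hδ0)
  have hn0 : (0 : ℝ) < n := Nat.cast_pos.mpr hn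
  set δ' : ℝ := (2 * M + 2) / n with hδ'def
  have hδ'0 : 0 < δ' := div_pos (by linarith) hn0
  have hδ'δ : δ' ≤ δ := by
    rw [hδ'def, div_le_iff₀ hn0]
    have h1 : (2 * M + 2) / δ ≤ (n : ℝ) := Nat.le_ceil _
    calc 2 * M + 2 = δ * ((2 * M + 2) / δ) := by field_simp
      _ ≤ δ * n := by nlinarith
      _ = δ * n := rfl
  set y : ℕ → ℝ := fun i => -M - 1 + i * δ' with hydef
  have hymono : Monotone y := fun i j hij => by
    have : (i : ℝ) ≤ j := Nat.cast_le.mpr hij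
    simp only [hydef]
    nlinarith
  have hyn : y n = M + 1 := by
    simp only [hydef, hδ'def]
    field_simp
    ring
  have hystep : ∀ i : ℕ, y (i + 1) = y i + δ' := fun i => by
    simp only [hydef]; push_cast; ring
  have hy0f : ∀ x, y 0 < f x := fun x => by
    have := abs_le.mp (hfM x)
    simp only [hydef]
    push_cast
    linarith [this.1]
  have hyfn : ∀ x, f x ≤ y n := fun x => by
    have := abs_le.mp (hfM x)
    rw [hyn]; linarith [this.2]
  -- the level sets
  set E : ℕ → Set K := fun i => f ⁻¹' Set.Ioc (y i) (y (i + 1)) with hEdef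
  have hEmeas : ∀ i, MeasurableSet (E i) := fun i =>
    f.continuous.measurable measurableSet_Ioc
  have hIocdisj : ∀ i j : ℕ, i ≠ j →
      Disjoint (Set.Ioc (y i) (y (i + 1))) (Set.Ioc (y j) (y (j + 1))) := by
    intro i j hij
    rcases hij.lt_or_gt with h | h
    · exact Set.Ioc_disjoint_Ioc.mpr ((min_le_left _ _).trans ((hymono h).trans (le_max_right _ _)))
    · exact Set.Ioc_disjoint_Ioc.mpr ((min_le_right _ _).trans ((hymono h).trans (le_max_left _ _)))
  have hEdisj : Set.Pairwise ↑(Finset.range n) (Disjoint on E) := fun i _ j _ hij =>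
    Disjoint.preimage _ (hIocdisj i j hij)
  have hEunion : ⋃ i ∈ Finset.range n, E i = Set.univ := by
    have h1 : (⋃ i ∈ Finset.range n, E i) = f ⁻¹' (Set.Ioc (y 0) (y n)) := by
      rw [← iUnion_Ioc_grid y hymono n]
      simp only [hEdef, Set.preimage_iUnion₂]
    rw [h1]
    exact Set.eq_univ_of_forall fun x => ⟨hy0f x, hyfn x⟩
  have hEtop : ∀ i, μ (E i) ≠ ⊤ := fun i => measure_ne_top μ _
  -- open approximations
  set κ : ℝ≥0∞ := ENNReal.ofReal (δ / n) with hκdef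
  have hκ0 : κ ≠ 0 := by
    simp only [hκdef, ne_eq, ENNReal.ofReal_eq_zero, not_le]
    positivity
  have hnuE : ∀ i, nu Λ (E i) < nu Λ (E i) + κ := fun i => by
    refine ENNReal.lt_add_right ?_ hκ0
    rw [← mu_apply hpos (hEmeas i)]
    exact hEtop i
  have hWex : ∀ i, ∃ U : Set K, IsOpen U ∧ E i ⊆ U ∧ LL Λ U < nu Λ (E i) + κ := fun i =>
    exists_open_of_nu_lt (hnuE i)
  choose W hWopen hEW hLW using hWex
  set V : ℕ → Set K := fun i => W i ∩ f ⁻¹' Set.Iio (y (i + 1) + δ) with hVdef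
  have hVopen : ∀ i, IsOpen (V i) := fun i =>
    (hWopen i).inter (isOpen_Iio.preimage f.continuous)
  have hEV : ∀ i, E i ⊆ V i := fun i x hx =>
    ⟨hEW i hx, by
      have : f x ≤ y (i + 1) := hx.2
      simp only [Set.mem_preimage, Set.mem_Iio]
      linarith⟩
  have hcover : (Set.univ : Set K) ⊆ ⋃ i : Fin n, V (i : ℕ) := by
    intro x _
    have hx : x ∈ ⋃ i ∈ Finset.range n, E i := hEunion ▸ Set.mem_univ x
    obtain ⟨i, hi, hxi⟩ := Set.mem_iUnion₂.mp hx
    exact Set.mem_iUnion.mpr ⟨⟨i, Finset.mem_range.mp hi⟩, hEV i hxi⟩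
  -- partition of unity
  obtain ⟨po, hsub⟩ := PartitionOfUnity.exists_isSubordinate (ι := Fin n)
    isClosed_univ (fun i => V (i : ℕ)) (fun i => hVopen i) hcover
  have hposum : ∀ x : K, ∑ i : Fin n, po i x = 1 := fun x => by
    have h1 := po.sum_eq_one (Set.mem_univ x)
    rwa [finsum_eq_sum_of_fintype] at h1
  have hdecomp : f = ∑ i : Fin n, po i * f := by
    ext x
    simp only [ContinuousMap.sum_apply, ContinuousMap.mul_apply]
    rw [← Finset.sum_mul, hposum x, one_mul]
  have hΛf : Λ f = ∑ i : Fin n, Λ (po i * f) := by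
    conv_lhs => rw [hdecomp]
    exact map_sum Λ _ _
  -- per-index data
  set a : Fin n → ℝ := fun i => Λ (po i) with hadef
  have ha0 : ∀ i, 0 ≤ a i := fun i => hpos _ fun x => po.nonneg i x
  set b : ℕ → ℝ := fun i => (μ (E i)).toReal with hbdef
  have hb0 : ∀ i, 0 ≤ b i := fun i => ENNReal.toReal_nonneg
  set c : ℝ := M + 1 + δ with hcdef
  have hc0 : 0 < c := by positivity
  -- key1 : Λ (po i * f) ≤ (y (i+1) + δ) * a i
  have key1 : ∀ i : Fin n, Λ (po i * f) ≤ (y ((i : ℕ) + 1) + δ) * a i := by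
    intro i
    have hpt : ∀ x, (po i * f) x ≤ ((y ((i : ℕ) + 1) + δ) • po i) x := by
      intro x
      simp only [ContinuousMap.mul_apply, ContinuousMap.smul_apply, smul_eq_mul]
      by_cases hx : po i x = 0
      · simp [hx]
      · have hxV : x ∈ V (i : ℕ) :=
          hsub i (subset_closure (by simpa [Function.mem_support] using hx))
        have hfx : f x < y ((i : ℕ) + 1) + δ := hxV.2
        have hpo : 0 ≤ po i x := po.nonneg i x
        calc po i x * f x ≤ po i x * (y ((i : ℕ) + 1) + δ) :=
              mul_le_mul_of_nonneg_left hfx.le hpo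
          _ = (y ((i : ℕ) + 1) + δ) * po i x := mul_comm _ _
    have := hmono hpos hpt
    rwa [_root_.map_smul, smul_eq_mul] at this
  -- key2 : a i ≤ b i + δ / n
  have key2 : ∀ i : Fin n, a i ≤ b (i : ℕ) + δ / n := by
    intro i
    have h1 : ENNReal.ofReal (a i) ≤ LL Λ (V (i : ℕ)) :=
      le_LL ⟨fun x => ⟨po.nonneg i x, po.le_one i x⟩, hsub i⟩
    have h2 : LL Λ (V (i : ℕ)) ≤ LL Λ (W (i : ℕ)) := LL_mono Set.inter_subset_left
    have h3 : LL Λ (W (i : ℕ)) ≤ μ (E (i : ℕ)) + κ := by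
      rw [hμdef, mu_apply hpos (hEmeas (i : ℕ))]
      exact (hLW (i : ℕ)).le
    have h4 : ENNReal.ofReal (a i) ≤ μ (E (i : ℕ)) + κ := (h1.trans h2).trans h3
    have h5 : μ (E (i : ℕ)) + κ ≠ ⊤ :=
      ENNReal.add_ne_top.mpr ⟨hEtop _, ENNReal.ofReal_ne_top⟩
    have h6 := ENNReal.toReal_mono h5 h4
    rwa [ENNReal.toReal_ofReal (ha0 i), ENNReal.toReal_add (hEtop _) ENNReal.ofReal_ne_top,
      ENNReal.toReal_ofReal (by positivity)] at h6
  -- coefficient bounds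
  have hcoeff : ∀ i : Fin n, 0 ≤ y ((i : ℕ) + 1) + δ + c := by
    intro i
    have h1 : y 0 ≤ y ((i : ℕ) + 1) := hymono (Nat.zero_le _)
    have h2 : y 0 = -M - 1 := by simp [hydef]
    simp only [hcdef]
    linarith
  have hcoeff2 : ∀ i : Fin n, y ((i : ℕ) + 1) + δ + c ≤ 2 * c := by
    intro i
    have h1 : y ((i : ℕ) + 1) ≤ y n := hymono (Nat.succ_le_of_lt i.2)
    rw [hyn] at h1
    simp only [hcdef]
    linarith
  -- per-index estimate
  have keyi : ∀ i : Fin n, Λ (po i * f) ≤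
      y (i : ℕ) * b (i : ℕ) + (δ' + δ + c) * b (i : ℕ) + 2 * c * (δ / n) - c * a i := by
    intro i
    have k1 := key1 i
    have k2 := key2 i
    have p1 : (y ((i : ℕ) + 1) + δ + c) * a i ≤ (y ((i : ℕ) + 1) + δ + c) * (b (i : ℕ) + δ / n) :=
      mul_le_mul_of_nonneg_left k2 (hcoeff i)
    have p3 : (y ((i : ℕ) + 1) + δ + c) * (δ / n) ≤ 2 * c * (δ / n) :=
      mul_le_mul_of_nonneg_right (hcoeff2 i) (by positivity)
    have hys := hystep (i : ℕ)
    calc Λ (po i * f) ≤ (y ((i : ℕ) + 1) + δ) * a i := k1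
      _ = (y ((i : ℕ) + 1) + δ + c) * a i - c * a i := by ring
      _ ≤ (y ((i : ℕ) + 1) + δ + c) * (b (i : ℕ) + δ / n) - c * a i := sub_le_sub_right p1 _
      _ = y (i : ℕ) * b (i : ℕ) + (δ' + δ + c) * b (i : ℕ)
          + (y ((i : ℕ) + 1) + δ + c) * (δ / n) - c * a i := by rw [hys]; ring
      _ ≤ y (i : ℕ) * b (i : ℕ) + (δ' + δ + c) * b (i : ℕ)
          + 2 * c * (δ / n) - c * a i :=
        sub_le_sub_right (add_le_add_right p3 _) _
  -- sums
  have hsumA : ∑ i : Fin n, a i = m := by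
    have h1 : (∑ i : Fin n, po i : C(K, ℝ)) = 1 := by
      ext x
      simp only [ContinuousMap.sum_apply, ContinuousMap.one_apply]
      exact hposum x
    calc ∑ i : Fin n, a i = Λ (∑ i : Fin n, po i) := (map_sum Λ _ _).symm
      _ = Λ 1 := by rw [h1]
      _ = m := hΛ1
  have hsumB : ∑ i : Fin n, b (i : ℕ) = m := by
    have h1 : μ Set.univ = ∑ i ∈ Finset.range n, μ (E i) := by
      rw [← hEunion]
      exact measure_biUnion_finset hEdisj fun i _ => hEmeas i
    have h2 : m = ∑ i ∈ Finset.range n, b i := by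
      rw [hmdef, h1, ENNReal.toReal_sum fun i _ => hEtop i]
    rw [h2]
    exact Fin.sum_univ_eq_sum_range (fun i => b i) n
  have hsumyb : ∑ i : Fin n, y (i : ℕ) * b (i : ℕ) ≤ T := by
    have h1 : ∀ i ∈ Finset.range n, y i * b i ≤ ∫ x in E i, f x ∂μ := by
      intro i _
      exact setIntegral_ge_of_const_le_real (hEmeas i) (hEtop i)
        (fun x hx => (hx.1).le) hint.integrableOn
    have h2 : ∑ i ∈ Finset.range n, ∫ x in E i, f x ∂μ = T := by
      rw [hTdef, ← setIntegral_univ, ← hEunion]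
      exact (integral_biUnion_finset (Finset.range n) (fun i _ => hEmeas i) hEdisj
        (fun i _ => hint.integrableOn)).symm
    calc ∑ i : Fin n, y (i : ℕ) * b (i : ℕ) = ∑ i ∈ Finset.range n, y i * b i :=
          Fin.sum_univ_eq_sum_range (fun i => y i * b i) n
      _ ≤ ∑ i ∈ Finset.range n, ∫ x in E i, f x ∂μ := Finset.sum_le_sum h1
      _ = T := h2
  -- put it together
  have hbig : Λ f ≤ (∑ i : Fin n, y (i : ℕ) * b (i : ℕ)) + (δ' + δ + c) * m + 2 * c * δ - c * m := by
    have h1 : Λ f ≤ ∑ i : Fin n,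
        (y (i : ℕ) * b (i : ℕ) + (δ' + δ + c) * b (i : ℕ) + 2 * c * (δ / n) - c * a i) := by
      rw [hΛf]
      exact Finset.sum_le_sum fun i _ => keyi i
    have h2 : ∑ i : Fin n,
        (y (i : ℕ) * b (i : ℕ) + (δ' + δ + c) * b (i : ℕ) + 2 * c * (δ / n) - c * a i)
        = (∑ i : Fin n, y (i : ℕ) * b (i : ℕ)) + (δ' + δ + c) * (∑ i : Fin n, b (i : ℕ))
          + (n : ℝ) * (2 * c * (δ / n)) - c * (∑ i : Fin n, a i) := by
      rw [Finset.sum_sub_distrib, Finset.sum_add_distrib, Finset.sum_add_distrib,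
        ← Finset.mul_sum, ← Finset.mul_sum, ← Finset.mul_sum, Finset.sum_const,
        Finset.card_univ, Fintype.card_fin, nsmul_eq_mul]
      ring
    have h3 : (n : ℝ) * (2 * c * (δ / n)) = 2 * c * δ := by field_simp
    rw [h2, h3, hsumA, hsumB] at h1
    exact h1
  have hfinal : Λ f ≤ T + δ * C := by
    have h4 := hsumyb
    have hcM : c ≤ M + 2 := by simp only [hcdef]; linarith
    calc Λ f ≤ (∑ i : Fin n, y (i : ℕ) * b (i : ℕ)) + (δ' + δ + c) * m + 2 * c * δ - c * m :=
          hbig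
      _ = (∑ i : Fin n, y (i : ℕ) * b (i : ℕ)) + (δ' + δ) * m + 2 * c * δ := by ring
      _ ≤ T + (δ' + δ) * m + 2 * c * δ := by linarith
      _ ≤ T + δ * C := by
          have : (δ' + δ) * m ≤ 2 * δ * m := by nlinarith
          have h2cδ : 2 * c * δ ≤ 2 * (M + 2) * δ := by nlinarith
          simp only [hCdef]
          nlinarith
  linarith

theorem integral_eq (hpos : ∀ f : C(K, ℝ), (∀ x, 0 ≤ f x) → 0 ≤ Λ f) (f : C(K, ℝ)) :
    ∫ x, f x ∂(mu Λ hpos) = Λ f := by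
  have h1 := le_integral hpos f
  have h2 := le_integral hpos (-f)
  have h3 : ∫ x, (-f : C(K, ℝ)) x ∂(mu Λ hpos) = -∫ x, f x ∂(mu Λ hpos) := by
    simp only [ContinuousMap.neg_apply]
    exact integral_neg _
  rw [map_neg, h3] at h2
  linarith

end StmtRiesz5


open StmtRiesz StmtRiesz2 StmtRiesz3 StmtRiesz4 StmtRiesz5

/-- Separating-hyperplane extraction of a contact force: if the convex set `M⁺` built
from `ℓ` and `N` does not meet the interior of `M⁻ = (-∞,0] × {w ≥ 0}`, and some `φ₀`
satisfies `N(φ₀) ≥ 1/2` pointwise, then there exist `λ < 0` and a nonnegative finite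
Radon measure `σ₀` with `λ ℓ⟨φ⟩ + ∫_K N(φ) dσ₀ = 0` for all `φ`, and
`‖σ₀‖ ≤ -2λ ℓ⟨φ₀⟩`. -/
theorem stmt17 {Z : Type*} [NormedAddCommGroup Z] [NormedSpace ℝ Z]
    {K : Type*} [MetricSpace K] [CompactSpace K] [MeasurableSpace K] [BorelSpace K]
    (ℓ : Z →L[ℝ] ℝ) (N : Z →L[ℝ] C(K, ℝ)) (φ₀ : Z)
    (hsep : ∀ (s : ℝ) (w : C(K, ℝ)) (φ : Z), ℓ φ ≤ s → (∀ x, w x ≤ N φ x) →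
      ¬(s < 0 ∧ ∀ x, 0 < w x))
    (hφ₀ : ∀ x, (1 : ℝ) / 2 ≤ N φ₀ x) :
    ∃ (lam : ℝ) (σ₀ : Measure K), lam < 0 ∧ IsFiniteMeasure σ₀ ∧
      (∀ φ : Z, lam * ℓ φ + ∫ x, N φ x ∂σ₀ = 0) ∧
      (σ₀ Set.univ).toReal ≤ -(2 * lam) * ℓ φ₀ := by
  classical
  -- Step 0: elementary consequences of `hsep`
  have lemA : ∀ φ : Z, (∀ x, 0 < N φ x) → 0 ≤ ℓ φ := by
    intro φ h
    by_contra hneg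
    exact hsep (ℓ φ) (N φ) φ le_rfl (fun x => le_rfl) ⟨lt_of_not_ge hneg, h⟩
  have hφ0pos : 0 ≤ ℓ φ₀ := lemA φ₀ fun x => lt_of_lt_of_le (by norm_num) (hφ₀ x)
  have lemA' : ∀ φ : Z, (∀ x, 0 ≤ N φ x) → 0 ≤ ℓ φ := by
    intro φ h
    have key : ∀ ε : ℝ, 0 < ε → 0 ≤ ℓ φ + ε * ℓ φ₀ := by
      intro ε hε
      have h1 : ∀ x, 0 < N (φ + ε • φ₀) x := by
        intro x
        have : N (φ + ε • φ₀) x = N φ x + ε * N φ₀ x := by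
          rw [map_add, _root_.map_smul]
          simp
        rw [this]
        have h2 : ε * (1 / 2) ≤ ε * N φ₀ x := mul_le_mul_of_nonneg_left (hφ₀ x) hε.le
        nlinarith [h x]
      have := lemA _ h1
      rwa [map_add, _root_.map_smul, smul_eq_mul] at this
    by_contra hc
    push_neg at hc
    rcases eq_or_lt_of_le hφ0pos with h0 | h0
    · have h5 := key 1 one_pos
      rw [← h0] at h5
      linarith
    · have hε : 0 < -ℓ φ / (2 * ℓ φ₀) := div_pos (by linarith) (by linarith)
      have h5 := key _ hε
      have h6 : -ℓ φ / (2 * ℓ φ₀) * ℓ φ₀ = -ℓ φ / 2 := by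
        field_simp
      rw [h6] at h5
      linarith
  -- the feasible-values set and its inf
  set S : C(K, ℝ) → Set ℝ := fun w => {r : ℝ | ∃ φ : Z, (∀ x, w x ≤ N φ x) ∧ ℓ φ = r} with hS
  have hwnorm : ∀ (w : C(K, ℝ)) (x : K), -‖w‖ ≤ w x ∧ w x ≤ ‖w‖ := by
    intro w x
    have := w.norm_coe_le_norm x
    rw [Real.norm_eq_abs] at this
    exact abs_le.mp this
  have hSne : ∀ w : C(K, ℝ), (S w).Nonempty := by
    intro w
    refine ⟨ℓ ((2 * ‖w‖) • φ₀), (2 * ‖w‖) • φ₀, fun x => ?_, rfl⟩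
    have h1 : N ((2 * ‖w‖) • φ₀) x = (2 * ‖w‖) * N φ₀ x := by rw [_root_.map_smul]; simp
    have h2 : (2 * ‖w‖) * (1 / 2) ≤ (2 * ‖w‖) * N φ₀ x :=
      mul_le_mul_of_nonneg_left (hφ₀ x) (by positivity)
    have := (hwnorm w x).2
    rw [h1]; linarith
  have hSbdd : ∀ w : C(K, ℝ), -((2 * ‖w‖ + 2) * ℓ φ₀) ∈ lowerBounds (S w) := by
    rintro w r ⟨φ, hφ, rfl⟩
    have h1 : ∀ x, 0 < N (φ + (2 * ‖w‖ + 2) • φ₀) x := by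
      intro x
      have he : N (φ + (2 * ‖w‖ + 2) • φ₀) x = N φ x + (2 * ‖w‖ + 2) * N φ₀ x := by
        rw [map_add, _root_.map_smul]; simp
      have h2 : (2 * ‖w‖ + 2) * (1 / 2) ≤ (2 * ‖w‖ + 2) * N φ₀ x :=
        mul_le_mul_of_nonneg_left (hφ₀ x) (by positivity)
      have h3 := (hwnorm w x).1
      have h4 := hφ x
      rw [he]
      nlinarith [norm_nonneg w]
    have := lemA _ h1
    rw [map_add, _root_.map_smul, smul_eq_mul] at this
    linarith
  have hSbdd' : ∀ w : C(K, ℝ), BddBelow (S w) := fun w => ⟨_, hSbdd w⟩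
  set p : C(K, ℝ) → ℝ := fun w => sInf (S w) with hp
  have hp_le : ∀ (w : C(K, ℝ)) (φ : Z), (∀ x, w x ≤ N φ x) → p w ≤ ℓ φ := by
    intro w φ h
    exact csInf_le (hSbdd' w) ⟨φ, h, rfl⟩
  have hp_near : ∀ (w : C(K, ℝ)) (ε : ℝ), 0 < ε →
      ∃ φ : Z, (∀ x, w x ≤ N φ x) ∧ ℓ φ < p w + ε := by
    intro w ε hε
    obtain ⟨r, ⟨φ, hφ, rfl⟩, hr⟩ := exists_lt_of_csInf_lt (hSne w) (lt_add_of_pos_right _ hε)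
    exact ⟨φ, hφ, hr⟩
  have hp_add : ∀ w w' : C(K, ℝ), p (w + w') ≤ p w + p w' := by
    intro w w'
    refine le_of_forall_pos_le_add fun ε hε => ?_
    obtain ⟨φ, hφ, hφlt⟩ := hp_near w (ε / 2) (by positivity)
    obtain ⟨φ', hφ', hφ'lt⟩ := hp_near w' (ε / 2) (by positivity)
    have hfeas : ∀ x, (w + w') x ≤ N (φ + φ') x := by
      intro x
      have : N (φ + φ') x = N φ x + N φ' x := by rw [map_add]; simp
      rw [this, ContinuousMap.add_apply]
      exact add_le_add (hφ x) (hφ' x)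
    have := hp_le (w + w') (φ + φ') hfeas
    rw [map_add] at this
    linarith
  have hp_smul_le : ∀ (r : ℝ), 0 < r → ∀ w : C(K, ℝ), p (r • w) ≤ r * p w := by
    intro r hr w
    refine le_of_forall_pos_le_add fun ε hε => ?_
    obtain ⟨φ, hφ, hφlt⟩ := hp_near w (ε / r) (by positivity)
    have hfeas : ∀ x, (r • w) x ≤ N (r • φ) x := by
      intro x
      have : N (r • φ) x = r * N φ x := by rw [_root_.map_smul]; simp
      rw [this, ContinuousMap.smul_apply, smul_eq_mul]
      exact mul_le_mul_of_nonneg_left (hφ x) hr.le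
    have h1 := hp_le (r • w) (r • φ) hfeas
    rw [_root_.map_smul, smul_eq_mul] at h1
    have h2 : r * ℓ φ < r * (p w + ε / r) := mul_lt_mul_of_pos_left hφlt hr
    have h3 : r * (p w + ε / r) = r * p w + ε := by field_simp
    linarith
  have hp_smul : ∀ (r : ℝ), 0 < r → ∀ w : C(K, ℝ), p (r • w) = r * p w := by
    intro r hr w
    refine le_antisymm (hp_smul_le r hr w) ?_
    have h1 := hp_smul_le r⁻¹ (by positivity) (r • w)
    have h2 : r⁻¹ • (r • w) = w := by
      rw [smul_smul, inv_mul_cancel₀ hr.ne', one_smul]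
    rw [h2] at h1
    have h3 : r * p w ≤ r * (r⁻¹ * p (r • w)) := mul_le_mul_of_nonneg_left h1 hr.le
    rwa [← mul_assoc, mul_inv_cancel₀ hr.ne', one_mul] at h3
  have hp0 : 0 ≤ p 0 := by
    refine le_csInf (hSne 0) ?_
    rintro r ⟨φ, hφ, rfl⟩
    exact lemA' φ fun x => by simpa using hφ x
  -- Hahn–Banach
  obtain ⟨g, hg0, hgle⟩ := exists_extension_of_le_sublinear
    (⟨⊥, 0⟩ : C(K, ℝ) →ₗ.[ℝ] ℝ) p (fun c hc x => hp_smul c hc x) hp_add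
    (by rintro ⟨x, hx⟩
        have hx0 : x = 0 := by simpa using hx
        simp only [hx0]
        simpa using hp0)
  -- `g` is a positive linear functional
  have hgpos : ∀ f : C(K, ℝ), (∀ x, 0 ≤ f x) → 0 ≤ g f := by
    intro f hf
    have h1 : ∀ x, (-f) x ≤ N 0 x := by
      intro x
      rw [map_zero]
      simpa using hf x
    have := (hgle (-f)).trans (hp_le (-f) 0 h1)
    rw [map_zero, map_neg] at this
    linarith
  have hgN : ∀ φ : Z, g (N φ) = ℓ φ := by
    intro φ
    have h1 : g (N φ) ≤ ℓ φ := (hgle (N φ)).trans (hp_le (N φ) φ fun x => le_rfl)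
    have h2 : g (-(N φ)) ≤ ℓ (-φ) := by
      refine (hgle (-(N φ))).trans (hp_le (-(N φ)) (-φ) fun x => ?_)
      rw [map_neg]
    have h3 : g (-(N φ)) = -g (N φ) := map_neg g _
    rw [h3, map_neg] at h2
    linarith
  have hg1 : g 1 ≤ 2 * ℓ φ₀ := by
    have hfeas : ∀ x, (1 : C(K, ℝ)) x ≤ N ((2 : ℝ) • φ₀) x := by
      intro x
      have : N ((2 : ℝ) • φ₀) x = 2 * N φ₀ x := by rw [_root_.map_smul]; simp
      rw [this, ContinuousMap.one_apply]
      linarith [hφ₀ x]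
    have := (hgle 1).trans (hp_le 1 ((2 : ℝ) • φ₀) hfeas)
    rwa [_root_.map_smul, smul_eq_mul] at this
  -- the measure
  refine ⟨-1, mu g hgpos, by norm_num, mu_finite hgpos, ?_, ?_⟩
  · intro φ
    rw [integral_eq hgpos (N φ), hgN φ]
    ring
  · rw [mu_univ hgpos, ENNReal.toReal_ofReal (hgpos 1 fun x => by simp)]
    have : -(2 * (-1 : ℝ)) * ℓ φ₀ = 2 * ℓ φ₀ := by ring
    rw [this]
    exact hg1
end
end
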